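/- Let $M$ be a field of characteristic different from $2$ and let $v, w \in M$ with $w^2 = v$ and $v \neq 0$, $v \neq 1$. Define $c_2 = (3v^2 + 9v - 20)/(4(1-v))$, $c_1 = (v-4)(v^3 + 3v^2 - 4v - 32)/(16(1-v))$, $c_0 = (v-4)^3(v^2 + 3v + 4)/(64(1-v))$, and define $\beta_1 = (w-2)(w+2)/4$, $\beta_2 = -(2+w)^2(2 - w + w^2)/(4(1+w))$, $\beta_3 = -(2-w)^2(2 + w + w^2)/(4(1-w))$. Then in $M[T]$ one has the polynomial identity $T^3 - c_2T^2 + c_1T - c_0 = (T - \beta_1)(T - \beta_2)(T - \beta_3)$. -/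

import Mathlib

open Polynomial

/-- The explicit factorization of the cubic `h` in the proof of Theorem 2: with
`w² = v`, the cubic `T³ - c₂T² + c₁T - c₀` factors as `(T - β₁)(T - β₂)(T - β₃)`. -/
theorem stmt_12 {M : Type*} [Field M] (hchar : (2 : M) ≠ 0) (v w : M)
    (hw : w ^ 2 = v) (hv0 : v ≠ 0) (hv1 : v ≠ 1) :
    let c2 : M := (3 * v ^ 2 + 9 * v - 20) / (4 * (1 - v))
    let c1 : M := (v - 4) * (v ^ 3 + 3 * v ^ 2 - 4 * v - 32) / (16 * (1 - v))
    let c0 : M := (v - 4) ^ 3 * (v ^ 2 + 3 * v + 4) / (64 * (1 - v))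
    let β₁ : M := (w - 2) * (w + 2) / 4
    let β₂ : M := -(2 + w) ^ 2 * (2 - w + w ^ 2) / (4 * (1 + w))
    let β₃ : M := -(2 - w) ^ 2 * (2 + w + w ^ 2) / (4 * (1 - w))
    (X ^ 3 - C c2 * X ^ 2 + C c1 * X - C c0 : M[X]) =
      (X - C β₁) * (X - C β₂) * (X - C β₃) := by
  intro c2 c1 c0 β₁ β₂ β₃
  subst hw
  have h4 : (4 : M) ≠ 0 := by
    have := mul_ne_zero hchar hchar
    rwa [show (2:M)*2 = 4 by norm_num] at this
  have h16 : (16 : M) ≠ 0 := by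
    have := mul_ne_zero h4 h4
    rwa [show (4:M)*4 = 16 by norm_num] at this
  have h64 : (64 : M) ≠ 0 := by
    have := mul_ne_zero h4 h16
    rwa [show (4:M)*16 = 64 by norm_num] at this
  have h1p : (1 : M) + w ≠ 0 := by
    intro h
    have hw' : w = -1 := by linear_combination h
    exact hv1 (by rw [hw']; ring)
  have h1m : (1 : M) - w ≠ 0 := by
    intro h
    have hw' : w = 1 := by linear_combination -h
    exact hv1 (by rw [hw']; ring)
  have hvm : (1 : M) - w ^ 2 ≠ 0 := by
    have := mul_ne_zero h1m h1p
    rwa [show ((1:M)-w)*(1+w) = 1 - w^2 by ring] at this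
  have e1 : c2 = β₁ + β₂ + β₃ := by
    simp only [c2, β₁, β₂, β₃]
    field_simp
    ring
  have e2 : c1 = β₁ * β₂ + β₁ * β₃ + β₂ * β₃ := by
    simp only [c1, β₁, β₂, β₃]
    have hh : ((1:M)-w)*(1+w) ≠ 0 := mul_ne_zero h1m h1p
    have h4096 : (4096:M) ≠ 0 := by
      have := pow_ne_zero 12 hchar
      rwa [show (2:M)^12 = 4096 by norm_num] at this
    have hb : (4096:M) - w^2*8192 + w^4*4096 ≠ 0 := by
      have := mul_ne_zero h4096 (pow_ne_zero 2 hvm)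
      intro h; exact this (by linear_combination h)
    field_simp
    ring
  have e3 : c0 = β₁ * β₂ * β₃ := by
    simp only [c0, β₁, β₂, β₃]
    field_simp
    ring
  rw [e1, e2, e3]
  simp only [map_add, map_mul]
  ring
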